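/- Let n_r, n_{t,1}, n_{t,2}, L* be positive integers with L* ≥ n_{t,1}+n_{t,2} and min(n_r, n_{t,1}+n_{t,2}) > min(n_r, n_{t,1}, n_{t,2}). If L* < [min(n_r,n_{t,1}+n_{t,2})·(n_{t,1}+n_{t,2}) - min(n_{t,1}·n_r, n_{t,1}², n_{t,2}·n_r, n_{t,2}²)] / [min(n_r,n_{t,1}+n_{t,2}) - min(n_r,n_{t,1},n_{t,2})], then max_{β∈[0,1]}[β·min(n_r,n_{t,1})(1-n_{t,1}/L*) + (1-β)·min(n_r,n_{t,2})(1-n_{t,2}/L*)] > min(n_r, n_{t,1}+n_{t,2})·(1 - (n_{t,1}+n_{t,2})/L*). -/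

import Mathlib

private lemma key_ineq (M A n s L : ℝ) (hL : 0 < L) (h : L * (M - A) < M * s - A * n) :
    M * (1 - s / L) < A * (1 - n / L) := by
  have e1 : M * (1 - s / L) = (L * M - M * s) / L := by field_simp
  have e2 : A * (1 - n / L) = (L * A - A * n) / L := by field_simp
  rw [e1, e2, div_lt_div_iff_of_pos_right hL]
  linarith

theorem stmt_8 (nr nt1 nt2 Lstar : ℕ) (hnr : 0 < nr) (hnt1 : 0 < nt1) (hnt2 : 0 < nt2)
    (hL : 0 < Lstar) (hLge : nt1 + nt2 ≤ Lstar)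
    (hden : min (nr:ℝ) (nt1 + nt2) > min (nr:ℝ) (min nt1 nt2))
    (hcond : (Lstar:ℝ) <
      (min (nr:ℝ) (nt1 + nt2) * ((nt1:ℝ) + nt2)
          - min (min ((nt1:ℝ) * nr) ((nt1:ℝ)^2)) (min ((nt2:ℝ) * nr) ((nt2:ℝ)^2))) /
        (min (nr:ℝ) (nt1 + nt2) - min (nr:ℝ) (min nt1 nt2))) :
    sSup ((fun β : ℝ => β * min (nr:ℝ) nt1 * (1 - (nt1:ℝ)/(Lstar:ℝ))
        + (1 - β) * min (nr:ℝ) nt2 * (1 - (nt2:ℝ)/(Lstar:ℝ))) '' Set.Icc 0 1) >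
      min (nr:ℝ) (nt1 + nt2) * (1 - ((nt1:ℝ) + nt2)/(Lstar:ℝ)) := by
  set f : ℝ → ℝ := fun β : ℝ => β * min (nr:ℝ) nt1 * (1 - (nt1:ℝ)/(Lstar:ℝ))
        + (1 - β) * min (nr:ℝ) nt2 * (1 - (nt2:ℝ)/(Lstar:ℝ)) with hf
  have hLpos : (0:ℝ) < (Lstar:ℝ) := by exact_mod_cast hL
  have hcont : Continuous f := by fun_prop
  have hbdd : BddAbove (f '' Set.Icc 0 1) :=
    (isCompact_Icc.image hcont).bddAbove
  have hmul := (lt_div_iff₀ (by linarith [hden] : (0:ℝ) < min (nr:ℝ) (nt1 + nt2) - min (nr:ℝ) (min nt1 nt2))).mp hcond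
  rcases le_total (nt1:ℝ) (nt2:ℝ) with h12 | h12
  · -- nt1 ≤ nt2, use β = 1
    have hm' : min (nr:ℝ) (min (nt1:ℝ) nt2) = min (nr:ℝ) nt1 := by
      rw [min_eq_left h12]
    have hm : min (min ((nt1:ℝ) * nr) ((nt1:ℝ)^2)) (min ((nt2:ℝ) * nr) ((nt2:ℝ)^2))
        = min (nr:ℝ) nt1 * nt1 := by
      have h1 : min ((nt1:ℝ) * nr) ((nt1:ℝ)^2) = min (nr:ℝ) nt1 * nt1 := by
        rcases le_total (nr:ℝ) (nt1:ℝ) with h | h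
        · rw [min_eq_left (by rw [sq]; exact mul_le_mul_of_nonneg_left h (by positivity)), min_eq_left h]; ring
        · rw [min_eq_right (by rw [sq]; exact mul_le_mul_of_nonneg_left h (by positivity)), min_eq_right h]; ring
      have h2 : min ((nt1:ℝ) * nr) ((nt1:ℝ)^2) ≤ min ((nt2:ℝ) * nr) ((nt2:ℝ)^2) := by
        have hnt1' : (0:ℝ) ≤ (nt1:ℝ) := by positivity
        apply le_min
        · exact le_trans (min_le_left _ _) (mul_le_mul_of_nonneg_right h12 (Nat.cast_nonneg nr))
        · exact le_trans (min_le_right _ _) (by nlinarith)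
      rw [min_eq_left h2, h1]
    rw [hm', hm] at hmul
    have hkey := key_ineq (min (nr:ℝ) (nt1 + nt2)) (min (nr:ℝ) nt1) nt1 ((nt1:ℝ) + nt2)
      (Lstar:ℝ) hLpos (by linarith)
    have hval : f 1 = min (nr:ℝ) nt1 * (1 - (nt1:ℝ)/(Lstar:ℝ)) := by simp [hf]
    have : f 1 ≤ sSup (f '' Set.Icc 0 1) :=
      le_csSup hbdd ⟨1, by norm_num, rfl⟩
    rw [hval] at this
    linarith
  · -- nt2 ≤ nt1, use β = 0
    have hm' : min (nr:ℝ) (min (nt1:ℝ) nt2) = min (nr:ℝ) nt2 := by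
      rw [min_eq_right h12]
    have hm : min (min ((nt1:ℝ) * nr) ((nt1:ℝ)^2)) (min ((nt2:ℝ) * nr) ((nt2:ℝ)^2))
        = min (nr:ℝ) nt2 * nt2 := by
      have h1 : min ((nt2:ℝ) * nr) ((nt2:ℝ)^2) = min (nr:ℝ) nt2 * nt2 := by
        rcases le_total (nr:ℝ) (nt2:ℝ) with h | h
        · rw [min_eq_left (by rw [sq]; exact mul_le_mul_of_nonneg_left h (by positivity)), min_eq_left h]; ring
        · rw [min_eq_right (by rw [sq]; exact mul_le_mul_of_nonneg_left h (by positivity)), min_eq_right h]; ring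
      have h2 : min ((nt2:ℝ) * nr) ((nt2:ℝ)^2) ≤ min ((nt1:ℝ) * nr) ((nt1:ℝ)^2) := by
        have hnt2' : (0:ℝ) ≤ (nt2:ℝ) := by positivity
        apply le_min
        · exact le_trans (min_le_left _ _) (mul_le_mul_of_nonneg_right h12 (Nat.cast_nonneg nr))
        · exact le_trans (min_le_right _ _) (by nlinarith)
      rw [min_eq_right h2, h1]
    rw [hm', hm] at hmul
    have hkey := key_ineq (min (nr:ℝ) (nt1 + nt2)) (min (nr:ℝ) nt2) nt2 ((nt1:ℝ) + nt2)
      (Lstar:ℝ) hLpos (by linarith)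
    have hval : f 0 = min (nr:ℝ) nt2 * (1 - (nt2:ℝ)/(Lstar:ℝ)) := by simp [hf]
    have : f 0 ≤ sSup (f '' Set.Icc 0 1) :=
      le_csSup hbdd ⟨0, by norm_num, rfl⟩
    rw [hval] at this
    linarith
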